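/- Let n, b, M, d be positive integers and L̄, L > 0. For each m ∈ {1, …, M} let F_{m,1}, …, F_{m,n} : ℝ^d → ℝ^d satisfy (1/n) Σ_{i=1}^n ‖F_{m,i}(u) − F_{m,i}(v)‖² ≤ L̄² ‖u − v‖² for all u, v ∈ ℝ^d, set F_m = (1/n) Σ_{i=1}^n F_{m,i}, and assume additionally that each F_m is L-Lipschitz. Fix 𝐳, 𝐰, 𝐳* ∈ (ℝ^d)^M. Let the M·b random indices j_{m,l} be independent and uniformly distributed on {1, …, n}, and define the random vector Δ ∈ (ℝ^d)^M whose m-th block is Δ_m = (1/b) Σ_{l=1}^b [ F_{m,j_{m,l}}(z_m) − F_{m,j_{m,l}}(w_m) ] + F_m(w_m). Then E‖Δ − 𝔽(𝐳*)‖² ≤ (2 L̄²/b) ‖𝐳 − 𝐰‖² + 2 L² ‖𝐳 − 𝐳*‖². -/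

import Mathlib

open scoped RealInnerProductSpace

lemma aux_sum_eval {ι κ : Type*} [Fintype ι] [DecidableEq ι] [Fintype κ] (x : ι) (f : κ → ℝ) :
    ∑ h : ι → κ, f (h x) = (Fintype.card κ : ℝ) ^ (Fintype.card ι - 1) * ∑ a, f a := by
  rw [← Equiv.sum_comp (Equiv.piSplitAt x (fun _ => κ)).symm (fun h => f (h x))]
  have key : ∀ p : κ × ({j : ι // j ≠ x} → κ),
      ((Equiv.piSplitAt x (fun _ => κ)).symm p) x = p.1 := by
    intro p; simp [Equiv.piSplitAt]
  simp_rw [key]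
  rw [Fintype.sum_prod_type]
  simp [Finset.sum_const, Fintype.card_fun, Finset.mul_sum, mul_comm, Finset.sum_mul]

lemma aux_meanzero {V : Type*} [NormedAddCommGroup V] [InnerProductSpace ℝ V]
    (n : ℕ) (Y : Fin n → V) (hY : ∑ i, Y i = 0) (b : ℕ) :
    (∑ g : Fin b → Fin n, ‖∑ l, Y (g l)‖ ^ 2) * (n : ℝ)
      = (b : ℝ) * (n : ℝ) ^ b * ∑ i, ‖Y i‖ ^ 2 := by
  induction b with
  | zero => simp
  | succ b ih =>
    have step : ∑ g : Fin (b+1) → Fin n, ‖∑ l, Y (g l)‖ ^ 2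
        = ∑ p : Fin n × (Fin b → Fin n), ‖Y p.1 + ∑ l, Y (p.2 l)‖ ^ 2 := by
      rw [← Equiv.sum_comp (Fin.consEquiv (fun _ : Fin (b+1) => Fin n))
        (fun g => ‖∑ l, Y (g l)‖ ^ 2)]
      refine Fintype.sum_congr _ _ fun p => ?_
      congr 1
      rw [Fin.sum_univ_succ]
      simp [Fin.consEquiv]
    have cross : ∀ g : Fin b → Fin n,
        ∑ a : Fin n, (2 * ⟪Y a, ∑ l, Y (g l)⟫) = 0 := by
      intro g
      rw [← Finset.mul_sum, ← sum_inner, hY, inner_zero_left, mul_zero]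
    have expand : ∑ p : Fin n × (Fin b → Fin n), ‖Y p.1 + ∑ l, Y (p.2 l)‖ ^ 2
        = ((n : ℝ) ^ b) * ∑ a, ‖Y a‖ ^ 2
          + (n : ℝ) * ∑ g : Fin b → Fin n, ‖∑ l, Y (g l)‖ ^ 2 := by
      simp_rw [norm_add_sq_real]
      rw [Finset.sum_add_distrib, Finset.sum_add_distrib]
      have t1 : ∑ p : Fin n × (Fin b → Fin n), ‖Y p.1‖^2 = ((n:ℝ)^b) * ∑ a, ‖Y a‖^2 := by
        rw [Fintype.sum_prod_type]
        simp [Finset.sum_const, Fintype.card_fun, Finset.mul_sum, mul_comm]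
      have t2 : ∑ p : Fin n × (Fin b → Fin n), 2*⟪Y p.1, ∑ l, Y (p.2 l)⟫ = 0 := by
        rw [Fintype.sum_prod_type_right]
        simp_rw [cross]
        simp
      have t3 : ∑ p : Fin n × (Fin b → Fin n), ‖∑ l, Y (p.2 l)‖^2
          = (n:ℝ) * ∑ g : Fin b → Fin n, ‖∑ l, Y (g l)‖^2 := by
        rw [Fintype.sum_prod_type]
        simp [Finset.mul_sum]
      rw [t1, t2, t3]; ring
    rw [step, expand]
    push_cast
    linear_combination (n : ℝ) * ih

lemma aux_var {V : Type*} [NormedAddCommGroup V] [InnerProductSpace ℝ V]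
    (n : ℕ) (hn : 0 < n) (X : Fin n → V) :
    ∑ i, ‖X i - (1/(n:ℝ)) • ∑ j, X j‖ ^ 2 ≤ ∑ i, ‖X i‖ ^ 2 := by
  have hn' : (0:ℝ) < n := by exact_mod_cast hn
  set μ := (1/(n:ℝ)) • ∑ j, X j with hμ
  have hsum : ∑ i, X i = (n:ℝ) • μ := by
    rw [hμ, smul_smul]
    rw [mul_one_div, div_self hn'.ne', one_smul]
  have key : ∑ i, ‖X i - μ‖ ^ 2 = ∑ i, ‖X i‖ ^ 2 - (n:ℝ) * ‖μ‖ ^ 2 := by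
    have e1 : ∀ i : Fin n, ‖X i - μ‖^2 = ‖X i‖^2 - 2 * ⟪X i, μ⟫ + ‖μ‖^2 :=
      fun i => norm_sub_sq_real _ _
    simp_rw [e1]
    rw [Finset.sum_add_distrib, Finset.sum_sub_distrib, Finset.sum_const]
    rw [← Finset.mul_sum, ← sum_inner, hsum, real_inner_smul_left,
      real_inner_self_eq_norm_sq]
    simp [nsmul_eq_mul]
    ring
  rw [key]
  nlinarith [sq_nonneg ‖μ‖]

lemma aux_exp {V : Type*} [NormedAddCommGroup V] [InnerProductSpace ℝ V]
    (n b M : ℕ) (hn : 0 < n) (hb : 0 < b) (m : Fin M)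
    (Y : Fin n → V) (hY : ∑ i, Y i = 0) :
    ((Fintype.card ((Fin M × Fin b) → Fin n) : ℝ))⁻¹ *
      ∑ ω : (Fin M × Fin b) → Fin n, ‖(1/(b:ℝ)) • ∑ l, Y (ω (m, l))‖ ^ 2
      = (1/((b:ℝ)*(n:ℝ))) * ∑ i, ‖Y i‖ ^ 2 := by
  have hn' : (0:ℝ) < n := by exact_mod_cast hn
  have hb' : (0:ℝ) < b := by exact_mod_cast hb
  have hM : 0 < M := m.pos
  have hsm : ∀ ω : (Fin M × Fin b) → Fin n,
      ‖(1/(b:ℝ)) • ∑ l, Y (ω (m, l))‖ ^ 2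
        = (1/(b:ℝ))^2 * ‖∑ l, Y (ω (m, l))‖ ^ 2 := by
    intro ω
    rw [norm_smul, mul_pow, Real.norm_eq_abs, abs_of_pos (by positivity)]
  simp_rw [hsm]
  rw [← Finset.mul_sum]
  have hcur : ∑ ω : (Fin M × Fin b) → Fin n, ‖∑ l, Y (ω (m, l))‖ ^ 2
      = ∑ h : Fin M → (Fin b → Fin n), ‖∑ l, Y (h m l)‖ ^ 2 := by
    rw [← Equiv.sum_comp (Equiv.curry (Fin M) (Fin b) (Fin n)).symm
      (fun ω => ‖∑ l, Y (ω (m, l))‖ ^ 2)]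
    rfl
  rw [hcur, aux_sum_eval m (fun g : Fin b → Fin n => ‖∑ l, Y (g l)‖ ^ 2)]
  have hS := aux_meanzero n Y hY b
  have hcard : ((Fintype.card ((Fin M × Fin b) → Fin n) : ℝ)) = ((n:ℝ)^b)^M := by
    simp [Fintype.card_fun]
    rw [mul_comm, pow_mul]
  have hcard2 : ((Fintype.card (Fin b → Fin n) : ℝ)) = (n:ℝ)^b := by
    simp [Fintype.card_fun]
  have hcardI : Fintype.card (Fin M) = M := Fintype.card_fin M
  rw [hcard, hcard2, hcardI]
  have hpow : ((n:ℝ)^b)^M = ((n:ℝ)^b)^(M-1) * (n:ℝ)^b := by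
    rw [← pow_succ, Nat.sub_add_cancel hM]
  rw [hpow]
  have hnb : (0:ℝ) < (n:ℝ)^b := by positivity
  have hnb1 : (0:ℝ) < ((n:ℝ)^b)^(M-1) := by positivity
  field_simp
  linear_combination hS

/-- Second moment of the extrapolation estimator `Δ` of Algorithm 1
(inequality (17) of Lemma E.1): the `M·b` indices `j_{m,l}` are i.i.d. uniform on
`{1,…,n}`, modeled as a uniformly distributed element `ω` of the finite space
`(Fin M × Fin b) → Fin n`. -/
theorem stmt_6 (n b M d : ℕ) (hn : 0 < n) (hb : 0 < b) (hM : 0 < M) (hd : 0 < d)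
    (Lbar L : ℝ) (hLbar : 0 < Lbar) (hL : 0 < L)
    (F : Fin M → Fin n → (EuclideanSpace ℝ (Fin d) → EuclideanSpace ℝ (Fin d)))
    (havg : ∀ m, ∀ u v : EuclideanSpace ℝ (Fin d),
      (1 / (n : ℝ)) * ∑ i, ‖F m i u - F m i v‖ ^ 2 ≤ Lbar ^ 2 * ‖u - v‖ ^ 2)
    (Fm : Fin M → EuclideanSpace ℝ (Fin d) → EuclideanSpace ℝ (Fin d))
    (hFm : ∀ m x, Fm m x = (1 / (n : ℝ)) • ∑ i, F m i x)
    (hlip : ∀ m, ∀ u v : EuclideanSpace ℝ (Fin d), ‖Fm m u - Fm m v‖ ≤ L * ‖u - v‖)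
    (z w zstar : PiLp 2 (fun _ : Fin M => EuclideanSpace ℝ (Fin d)))
    (Δ : ((Fin M × Fin b) → Fin n) → PiLp 2 (fun _ : Fin M => EuclideanSpace ℝ (Fin d)))
    (hΔ : ∀ ω m, Δ ω m =
      (1 / (b : ℝ)) • (∑ l : Fin b, (F m (ω (m, l)) (z m) - F m (ω (m, l)) (w m)))
        + Fm m (w m))
    (Fzstar : PiLp 2 (fun _ : Fin M => EuclideanSpace ℝ (Fin d)))
    (hFzstar : ∀ m, Fzstar m = Fm m (zstar m)) :
    ((Fintype.card ((Fin M × Fin b) → Fin n) : ℝ))⁻¹ * (∑ ω, ‖Δ ω - Fzstar‖ ^ 2) ≤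
      (2 * Lbar ^ 2 / b) * ‖z - w‖ ^ 2 + 2 * L ^ 2 * ‖z - zstar‖ ^ 2 := by
  classical
  have hn' : (0:ℝ) < n := by exact_mod_cast hn
  have hb' : (0:ℝ) < b := by exact_mod_cast hb
  set X : Fin M → Fin n → EuclideanSpace ℝ (Fin d) :=
    fun m i => F m i (z m) - F m i (w m) with hXdef
  set Y : Fin M → Fin n → EuclideanSpace ℝ (Fin d) :=
    fun m i => X m i - (Fm m (z m) - Fm m (w m)) with hYdef
  have hmu : ∀ m, Fm m (z m) - Fm m (w m) = (1/(n:ℝ)) • ∑ i, X m i := by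
    intro m
    rw [hFm, hFm, ← smul_sub, ← Finset.sum_sub_distrib]
  have hYsum : ∀ m, ∑ i, Y m i = 0 := by
    intro m
    simp only [hYdef]
    rw [Finset.sum_sub_distrib, Finset.sum_const, hmu m, Finset.card_univ,
      Fintype.card_fin, ← Nat.cast_smul_eq_nsmul ℝ, smul_smul]
    rw [mul_one_div, div_self hn'.ne', one_smul, sub_self]
  have hdecomp : ∀ (ω : (Fin M × Fin b) → Fin n) (m : Fin M),
      Δ ω m - Fzstar m
        = (1/(b:ℝ)) • (∑ l, Y m (ω (m, l))) + (Fm m (z m) - Fm m (zstar m)) := by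
    intro ω m
    rw [hΔ, hFzstar]
    have h1 : ∑ l : Fin b, Y m (ω (m, l))
        = (∑ l : Fin b, X m (ω (m, l))) - (b:ℝ) • (Fm m (z m) - Fm m (w m)) := by
      simp only [hYdef]
      rw [Finset.sum_sub_distrib, Finset.sum_const, Finset.card_univ, Fintype.card_fin,
        ← Nat.cast_smul_eq_nsmul ℝ]
    rw [h1, smul_sub, smul_smul, one_div, inv_mul_cancel₀ hb'.ne', one_smul]
    simp only [hXdef]
    abel
  have hpt : ∀ (ω : (Fin M × Fin b) → Fin n) (m : Fin M), ‖Δ ω m - Fzstar m‖^2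
      ≤ 2 * ‖(1/(b:ℝ)) • ∑ l, Y m (ω (m, l))‖^2 + 2 * L^2 * ‖z m - zstar m‖^2 := by
    intro ω m
    rw [hdecomp ω m]
    set a := (1/(b:ℝ)) • ∑ l, Y m (ω (m, l)) with ha
    set e := Fm m (z m) - Fm m (zstar m) with he
    have h1 := norm_add_le a e
    have h2 : ‖e‖ ≤ L * ‖z m - zstar m‖ := hlip m _ _
    have h3 := norm_nonneg a
    have h4 := norm_nonneg e
    have h5 := norm_nonneg (a + e)
    have h6 := norm_nonneg (z m - zstar m)
    nlinarith [sq_nonneg (‖a‖ - ‖e‖), hL.le]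
  have hcardpos : (0:ℝ) < (Fintype.card ((Fin M × Fin b) → Fin n) : ℝ) := by
    have : 0 < Fintype.card ((Fin M × Fin b) → Fin n) :=
      Fintype.card_pos_iff.mpr ⟨fun _ => ⟨0, hn⟩⟩
    exact_mod_cast this
  set c : ℝ := (Fintype.card ((Fin M × Fin b) → Fin n) : ℝ) with hcdef
  have hnorm : ∀ ω : (Fin M × Fin b) → Fin n,
      ‖Δ ω - Fzstar‖^2 = ∑ m, ‖Δ ω m - Fzstar m‖^2 := by
    intro ω
    rw [PiLp.norm_sq_eq_of_L2]
    exact Fintype.sum_congr _ _ fun m => by simp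
  have hA : ∀ m : Fin M, c⁻¹ * ∑ ω : (Fin M × Fin b) → Fin n,
      ‖(1/(b:ℝ)) • ∑ l, Y m (ω (m, l))‖^2 ≤ (Lbar^2 / b) * ‖z m - w m‖^2 := by
    intro m
    rw [hcdef, aux_exp n b M hn hb m (Y m) (hYsum m)]
    have h1 : ∑ i, ‖Y m i‖^2 ≤ ∑ i, ‖X m i‖^2 := by
      have := aux_var n hn (X m)
      simp only [hYdef, hmu m]
      exact this
    have h2 : (1/(n:ℝ)) * ∑ i, ‖X m i‖^2 ≤ Lbar^2 * ‖z m - w m‖^2 := by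
      simp only [hXdef]
      exact havg m (z m) (w m)
    calc (1/((b:ℝ)*n)) * ∑ i, ‖Y m i‖^2
        ≤ (1/((b:ℝ)*n)) * ∑ i, ‖X m i‖^2 := by
          apply mul_le_mul_of_nonneg_left h1 (by positivity)
      _ = (1/(b:ℝ)) * ((1/(n:ℝ)) * ∑ i, ‖X m i‖^2) := by ring
      _ ≤ (1/(b:ℝ)) * (Lbar^2 * ‖z m - w m‖^2) := by
          apply mul_le_mul_of_nonneg_left h2 (by positivity)
      _ = (Lbar^2 / b) * ‖z m - w m‖^2 := by ring
  calc c⁻¹ * ∑ ω : (Fin M × Fin b) → Fin n, ‖Δ ω - Fzstar‖^2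
      = c⁻¹ * ∑ ω : (Fin M × Fin b) → Fin n, ∑ m, ‖Δ ω m - Fzstar m‖^2 := by
        simp_rw [hnorm]
    _ ≤ c⁻¹ * ∑ ω : (Fin M × Fin b) → Fin n, ∑ m,
          (2 * ‖(1/(b:ℝ)) • ∑ l, Y m (ω (m, l))‖^2 + 2 * L^2 * ‖z m - zstar m‖^2) := by
        apply mul_le_mul_of_nonneg_left _ (inv_nonneg.2 hcardpos.le)
        exact Finset.sum_le_sum fun ω _ => Finset.sum_le_sum fun m _ => hpt ω m
    _ = (∑ m, 2 * (c⁻¹ * ∑ ω : (Fin M × Fin b) → Fin n,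
            ‖(1/(b:ℝ)) • ∑ l, Y m (ω (m, l))‖^2))
          + ∑ m, 2 * L^2 * ‖z m - zstar m‖^2 := by
        simp_rw [Finset.sum_add_distrib]
        rw [mul_add]
        congr 1
        · rw [Finset.sum_comm, Finset.mul_sum]
          refine Finset.sum_congr rfl fun m _ => ?_
          rw [← Finset.mul_sum]
          ring
        · rw [Finset.sum_const, Finset.card_univ, nsmul_eq_mul, hcdef]
          rw [inv_mul_cancel_left₀ hcardpos.ne']
    _ ≤ (∑ m, 2 * ((Lbar^2 / b) * ‖z m - w m‖^2)) + ∑ m, 2 * L^2 * ‖z m - zstar m‖^2 := by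
        apply add_le_add_left
        exact Finset.sum_le_sum fun m _ =>
          mul_le_mul_of_nonneg_left (hA m) (by norm_num)
    _ = (2 * Lbar^2 / b) * ‖z - w‖^2 + 2 * L^2 * ‖z - zstar‖^2 := by
        rw [PiLp.norm_sq_eq_of_L2 _ (z - w), PiLp.norm_sq_eq_of_L2 _ (z - zstar),
          Finset.mul_sum, Finset.mul_sum]
        congr 1
        all_goals
          refine Finset.sum_congr rfl fun m _ => ?_
          simp only [PiLp.sub_apply]
          try ring
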